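/- Let α ∈ (0, 1), κ ∈ (0, 1), β > 0, C_δ > 0, and let q, o, ô : ℕ → ℝ be sequences of nonnegative reals such that for every k: q(k+1) ≤ α q(k) + C_δ ô(k); ô(k) ≤ o(k); o(k+1) ≤ o(k); β o(k) ≤ q(k); and whenever C_δ ô(k) ≥ ((1 − α)/2) q(k) one has o(k+1) ≤ κ o(k). Then there exist constants ζ > 0, C_q > 0 and γ ∈ (0, 1) such that q(k) + ζ o(k) ≤ C_q γ^k for all k. -/

import Mathlib

/-- **Theorem 6.4 (Termination in Finite Steps) as a lemma about real
sequences.** The quasi-error plus a multiple of the oscillation decays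
geometrically. -/
theorem termination_in_finite_steps
    (α κ β C_δ : ℝ) (hα0 : 0 < α) (hα1 : α < 1) (hκ0 : 0 < κ) (hκ1 : κ < 1)
    (hβ : 0 < β) (hC_δ : 0 < C_δ)
    (q o oh : ℕ → ℝ)
    (hq : ∀ k, 0 ≤ q k) (ho : ∀ k, 0 ≤ o k) (hoh : ∀ k, 0 ≤ oh k)
    (hcontr : ∀ k, q (k + 1) ≤ α * q k + C_δ * oh k)
    (hohle : ∀ k, oh k ≤ o k)
    (hrefine : ∀ k, o (k + 1) ≤ o k)
    (hdom : ∀ k, β * o k ≤ q k)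
    (hcase2 : ∀ k, (1 - α) / 2 * q k ≤ C_δ * oh k → o (k + 1) ≤ κ * o k) :
    ∃ ζ : ℝ, 0 < ζ ∧ ∃ C_q : ℝ, 0 < C_q ∧ ∃ γ : ℝ, 0 < γ ∧ γ < 1 ∧
      ∀ k, q k + ζ * o k ≤ C_q * γ ^ k := by
  have h1κ : 0 < 1 - κ := by linarith
  have h1α : 0 < 1 - α := by linarith
  set ζ : ℝ := 2 * C_δ / (1 - κ) with hζdef
  have hζ : 0 < ζ := div_pos (by linarith) h1κ
  have hζκ : ζ * (1 - κ) = 2 * C_δ := by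
    field_simp [hζdef]
    rw [hζdef]; exact div_mul_cancel₀ _ (ne_of_gt h1κ)
  set γ : ℝ := max (max ((1 + κ) / 2) ((3 + α) / 4)) (1 - β * (1 - α) / (4 * ζ))
    with hγdef
  have hγκ : (1 + κ) / 2 ≤ γ := le_max_of_le_left (le_max_left _ _)
  have hγα : (3 + α) / 4 ≤ γ := le_max_of_le_left (le_max_right _ _)
  have hγζ : 1 - β * (1 - α) / (4 * ζ) ≤ γ := le_max_right _ _
  have hpos : 0 < β * (1 - α) / (4 * ζ) := by positivity
  have hγ1 : γ < 1 := by
    apply max_lt (max_lt (by linarith) (by linarith)) (by linarith)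
  have hγ0 : 0 < γ := lt_of_lt_of_le (by linarith) hγα
  -- one-step contraction
  have hstep : ∀ k, q (k + 1) + ζ * o (k + 1) ≤ γ * (q k + ζ * o k) := by
    intro k
    by_cases hc : (1 - α) / 2 * q k ≤ C_δ * oh k
    · -- case 2: oscillation reduction
      have h2 := hcase2 k hc
      have h1 := hcontr k
      have hohk := hohle k
      -- C_δ + ζ * κ ≤ γ * ζ
      have hζγ : C_δ + ζ * κ ≤ γ * ζ := by nlinarith
      have hαγ : α ≤ γ := by linarith
      nlinarith [ho k, hq k, mul_nonneg (le_of_lt hζ) (ho k),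
        mul_le_mul_of_nonneg_left h2 (le_of_lt hζ)]
    · -- case 1: estimator dominates
      push_neg at hc
      have h1 := hcontr k
      have hq1 : q (k + 1) ≤ (1 + α) / 2 * q k := by nlinarith
      have hro := hrefine k
      have h1γ : 1 - γ ≤ β * (1 - α) / (4 * ζ) := by linarith
      -- (1 - γ) * ζ * o k ≤ (1-α)/4 * q k
      have key : (1 - γ) * (ζ * o k) ≤ (1 - α) / 4 * q k := by
        have hβo := hdom k
        have h1 : (1 - γ) * (ζ * o k) ≤ (β * (1 - α) / (4 * ζ)) * (ζ * o k) := by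
          apply mul_le_mul_of_nonneg_right h1γ
          exact mul_nonneg (le_of_lt hζ) (ho k)
        have h2 : (β * (1 - α) / (4 * ζ)) * (ζ * o k) = (1 - α) / 4 * (β * o k) := by
          field_simp
        have h3 : (1 - α) / 4 * (β * o k) ≤ (1 - α) / 4 * q k := by
          apply mul_le_mul_of_nonneg_left hβo (by linarith)
        linarith
      have hζo : ζ * o (k + 1) ≤ ζ * o k :=
        mul_le_mul_of_nonneg_left hro (le_of_lt hζ)
      nlinarith [hq k]
  -- geometric decay by induction
  refine ⟨ζ, hζ, q 0 + ζ * o 0 + 1, by nlinarith [hq 0, ho 0, mul_nonneg hζ.le (ho 0)], γ, hγ0, hγ1, ?_⟩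
  have hbase : ∀ k, q k + ζ * o k ≤ (q 0 + ζ * o 0) * γ ^ k := by
    intro k
    induction k with
    | zero => simp
    | succ n ih =>
      calc q (n + 1) + ζ * o (n + 1) ≤ γ * (q n + ζ * o n) := hstep n
        _ ≤ γ * ((q 0 + ζ * o 0) * γ ^ n) :=
            mul_le_mul_of_nonneg_left ih (le_of_lt hγ0)
        _ = (q 0 + ζ * o 0) * γ ^ (n + 1) := by ring
  intro k
  have hγk : 0 < γ ^ k := pow_pos hγ0 k
  have := hbase k
  nlinarith
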